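/- arXiv:2605.00657 — 2 statements merged into one kernel-verified Lean document; each statement's English description precedes it below -/
import Mathlib

section
/- Let a ≥ 2 be an integer and p ∈ (0,1) with q = 1 − p. For every ν ∈ {1,…,a−1} and every z ∈ {1,…,a−1}, the spectral coefficient B_ν satisfies the harmonic-type relation p·B_ν(z+1) + q·B_ν(z−1) = λ_ν·B_ν(z), where B_ν(w) = (2/a)·(p/q)^{(a−w)/2}·sin(πν(a−w)/a)·sin(πν/a) for any integer w ∈ {0,…,a} and λ_ν = 2·√(p·q)·cos(πν/a). (Note B_ν(0) = B_ν(a) = 0.) -/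
/-- Spectral coefficient `B_ν(w) = (2/a)·(p/q)^{(a−w)/2}·sin(πν(a−w)/a)·sin(πν/a)`,
with `q = 1 − p`. -/
noncomputable def Bcoef (a : ℕ) (p : ℝ) (ν w : ℕ) : ℝ :=
  (2 / a) * (p / (1 - p)) ^ (((a : ℝ) - w) / 2) *
    Real.sin (Real.pi * ν * ((a : ℝ) - w) / a) * Real.sin (Real.pi * ν / a)

/-- the spectral coefficient `B_ν` satisfies the harmonic-type
relation `p·B_ν(z+1) + q·B_ν(z−1) = λ_ν·B_ν(z)` with
`λ_ν = 2√(pq)·cos(πν/a)`. -/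
theorem stmt_6 (a : ℕ) (ha : 2 ≤ a) (p : ℝ) (hp : p ∈ Set.Ioo (0 : ℝ) 1) :
    ∀ ν ∈ Finset.Icc 1 (a - 1), ∀ z ∈ Finset.Icc 1 (a - 1),
      p * Bcoef a p ν (z + 1) + (1 - p) * Bcoef a p ν (z - 1) =
        (2 * Real.sqrt (p * (1 - p)) * Real.cos (Real.pi * ν / a)) * Bcoef a p ν z := by
  intro ν hν z hz
  obtain ⟨hp0, hp1⟩ := hp
  have hq : (0:ℝ) < 1 - p := by linarith
  have hz1 : 1 ≤ z := (Finset.mem_Icc.mp hz).1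
  have hzc : ((z - 1 : ℕ) : ℝ) = (z : ℝ) - 1 := by
    rw [Nat.cast_sub hz1, Nat.cast_one]
  have ha0 : (a:ℝ) ≠ 0 := by positivity
  have hr : (0:ℝ) < p / (1 - p) := div_pos hp0 hq
  unfold Bcoef
  rw [hzc]
  push_cast
  have e1 : (p/(1-p)) ^ (((a:ℝ) - ((z:ℝ)+1))/2)
      = (p/(1-p)) ^ (((a:ℝ) - z)/2) * (p/(1-p)) ^ (-(1/2) : ℝ) := by
    rw [← Real.rpow_add hr]; congr 1; ring
  have e2 : (p/(1-p)) ^ (((a:ℝ) - ((z:ℝ)-1))/2)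
      = (p/(1-p)) ^ (((a:ℝ) - z)/2) * (p/(1-p)) ^ ((1/2) : ℝ) := by
    rw [← Real.rpow_add hr]; congr 1; ring
  have hsp : Real.sqrt p ≠ 0 := by positivity
  have hsq : Real.sqrt (1-p) ≠ 0 := by positivity
  have hsd : (p/(1-p)) ^ ((1/2) : ℝ) = Real.sqrt p / Real.sqrt (1-p) := by
    rw [← Real.sqrt_eq_rpow, Real.sqrt_div' p hq.le]
  have h2 : (1 - p) * (p/(1-p)) ^ ((1/2) : ℝ) = Real.sqrt (p * (1-p)) := by
    rw [hsd, Real.sqrt_mul hp0.le]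
    field_simp
    linear_combination (-1 : ℝ) * Real.mul_self_sqrt hq.le
  have h1 : p * (p/(1-p)) ^ (-(1/2) : ℝ) = Real.sqrt (p * (1-p)) := by
    rw [Real.rpow_neg hr.le, hsd, Real.sqrt_mul hp0.le]
    field_simp
    linear_combination (-1 : ℝ) * Real.mul_self_sqrt hp0.le
  have t1 : Real.pi * ν * ((a:ℝ) - ((z:ℝ)+1)) / a
      = Real.pi * ν * ((a:ℝ) - z) / a - Real.pi * ν / a := by
    field_simp; ring
  have t2 : Real.pi * ν * ((a:ℝ) - ((z:ℝ)-1)) / a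
      = Real.pi * ν * ((a:ℝ) - z) / a + Real.pi * ν / a := by
    field_simp; ring
  rw [e1, e2, t1, t2, Real.sin_sub, Real.sin_add]
  set X := (p/(1-p)) ^ (((a:ℝ) - z)/2)
  set sθ := Real.sin (Real.pi * ν * ((a:ℝ) - z) / a)
  set cθ := Real.cos (Real.pi * ν * ((a:ℝ) - z) / a)
  set sc := Real.sin (Real.pi * ν / a)
  set cc := Real.cos (Real.pi * ν / a)
  linear_combination (2 / (a:ℝ) * X * (sθ * cc - cθ * sc) * sc) * h1
    + (2 / (a:ℝ) * X * (sθ * cc + cθ * sc) * sc) * h2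
end

section
/- Let N, m ≥ 1 be integers, let Z = {z_1,…,z_m} be a finite set, let σ : Z → Z be an involution (σ∘σ = id), let κ : Z → ℝ_{>0} and K > 0 satisfy κ(z)·κ(σ(z)) = K for all z ∈ Z and κ(z₀) = √K for every fixed point z₀ of σ. Let A, B : {1,…,N} × Z → ℝ satisfy the spectral duality B_ν(z) = κ(z)·A_ν(σ(z)) for all ν ∈ {1,…,N} and z ∈ Z, and let f_ν : (0,1) → ℝ be arbitrary functions. Let π : Z → ℝ_{≥0} be weights satisfying π(z)·√(κ(z)) = π(σ(z))·√(κ(σ(z))) for all z ∈ Z. Then, setting C* = 1/(1 + √K), for every γ ∈ (0,1): Σ_{z∈Z} π(z)·Σ_{ν=1}^{N} A_ν(z)·f_ν(γ) = C*·Σ_{z∈Z} π(z)·Σ_{ν=1}^{N} (A_ν(z) + B_ν(z))·f_ν(γ). In particular, the coupling constant C(π,γ) = ū_π(γ)/s̄_π(γ) equals C* independently of γ, of the choice of π within this family, and of the weights assigned to fixed points of σ. -/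
/-- abstract invariance principle. Given a spectral duality
`B_ν(z) = κ(z)·A_ν(σ(z))` with involution `σ`, mode-independent weights `κ`
with `κ(z)·κ(σ(z)) = K` and `κ(z₀) = √K` at fixed points, any nonnegative
weights `π` balanced along `σ` (`π(z)√κ(z) = π(σ(z))√κ(σ(z))`) satisfy
`ū_π(γ) = C*·s̄_π(γ)` with `C* = 1/(1+√K)`, for every `γ ∈ (0,1)` and any
transfer functions `f_ν`. -/
theorem stmt_14 (N : ℕ) (hN : 1 ≤ N) {Z : Type*} [Fintype Z] [Nonempty Z]
    (σ : Z → Z) (hσ : ∀ z, σ (σ z) = z)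
    (κ : Z → ℝ) (hκ : ∀ z, 0 < κ z) (K : ℝ) (hK : 0 < K)
    (hκK : ∀ z, κ z * κ (σ z) = K)
    (hfix : ∀ z, σ z = z → κ z = Real.sqrt K)
    (A B : Fin N → Z → ℝ)
    (hdual : ∀ ν z, B ν z = κ z * A ν (σ z))
    (f : Fin N → ℝ → ℝ)
    (π : Z → ℝ) (hπ : ∀ z, 0 ≤ π z)
    (hbal : ∀ z, π z * Real.sqrt (κ z) = π (σ z) * Real.sqrt (κ (σ z))) :
    ∀ γ ∈ Set.Ioo (0 : ℝ) 1,
      ∑ z, π z * ∑ ν, A ν z * f ν γ =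
        (1 / (1 + Real.sqrt K)) * ∑ z, π z * ∑ ν, (A ν z + B ν z) * f ν γ := by
  intro γ hγ
  have hsK : 0 < Real.sqrt K := Real.sqrt_pos.mpr hK
  -- key pointwise identity: π(σ z) * κ(σ z) = √K * π z
  have key : ∀ z, π (σ z) * κ (σ z) = Real.sqrt K * π z := by
    intro z
    have h1 : π (σ z) * Real.sqrt (κ (σ z)) * Real.sqrt (κ (σ z))
        = π z * Real.sqrt (κ z) * Real.sqrt (κ (σ z)) := by
      rw [← hbal z]
    have h2 : Real.sqrt (κ (σ z)) * Real.sqrt (κ (σ z)) = κ (σ z) :=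
      Real.mul_self_sqrt (hκ (σ z)).le
    have h3 : Real.sqrt (κ z) * Real.sqrt (κ (σ z)) = Real.sqrt K := by
      rw [← Real.sqrt_mul (hκ z).le, hκK z]
    calc π (σ z) * κ (σ z) = π (σ z) * Real.sqrt (κ (σ z)) * Real.sqrt (κ (σ z)) := by
          rw [mul_assoc, h2]
      _ = π z * (Real.sqrt (κ z) * Real.sqrt (κ (σ z))) := by rw [h1, mul_assoc]
      _ = Real.sqrt K * π z := by rw [h3, mul_comm]
  set U := ∑ z, π z * ∑ ν, A ν z * f ν γ with hU
  have hV : ∑ z, π z * ∑ ν, B ν z * f ν γ = Real.sqrt K * U := by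
    have hsum : ∑ z, π z * ∑ ν, B ν z * f ν γ
        = ∑ z, π (σ z) * κ (σ z) * ∑ ν, A ν z * f ν γ := by
      rw [← Equiv.sum_comp ((Function.Involutive.toPerm σ hσ))
        (fun z => π (σ z) * κ (σ z) * ∑ ν, A ν z * f ν γ)]
      refine Finset.sum_congr rfl fun z _ => ?_
      change π z * ∑ ν, B ν z * f ν γ = π (σ (σ z)) * κ (σ (σ z)) * ∑ ν, A ν (σ z) * f ν γ
      simp only [hσ]
      simp only [hdual, Finset.mul_sum]
      exact Finset.sum_congr rfl fun ν _ => by ring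
    rw [hsum, hU, Finset.mul_sum]
    refine Finset.sum_congr rfl fun z _ => by rw [key z]; ring
  have hmain : (1 + Real.sqrt K) * U = ∑ z, π z * ∑ ν, (A ν z + B ν z) * f ν γ := by
    have : ∑ z, π z * ∑ ν, (A ν z + B ν z) * f ν γ
        = U + ∑ z, π z * ∑ ν, B ν z * f ν γ := by
      rw [hU, ← Finset.sum_add_distrib]
      refine Finset.sum_congr rfl fun z _ => ?_
      rw [← mul_add, ← Finset.sum_add_distrib]
      congr 1
      refine Finset.sum_congr rfl fun ν _ => by ring
    rw [this, hV]; ring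
  have hpos : (0:ℝ) < 1 + Real.sqrt K := by linarith
  rw [← hmain]
  field_simp
end
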